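/- Let α₁ ≥ α₂ > 0 and β_i = (α_i + 1/2) x_c⁻¹ for a fixed x_c > 0, and let M_i be the distribution on (0,∞) with density c_i u^{α_i −1} e^{−β_i u} (Gamma(α_i, rate β_i)). For 0 < r₁ ≤ 1 ≤ r₂ linked by r₁ − log r₁ = r₂ − log r₂ (equivalently log(r₁/r₂) = r₁ − r₂), one has M₁(x_c r₁ ≤ u ≤ x_c r₂) ≥ M₂(x_c r₁ ≤ u ≤ x_c r₂) for all r₂ ≥ 1. -/

import Mathlib

open MeasureTheory Real Set

/-- Gamma(shape α, rate β) density (on `(0,∞)`). -/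
noncomputable def gammaDens (a b u : ℝ) : ℝ :=
  (b ^ a / Real.Gamma a) * u ^ (a - 1) * Real.exp (-b * u)

/-- `log u - u/xc` is monotone on `(0, xc]`. -/
lemma phiA {xc u v : ℝ} (hu : 0 < u) (huv : u ≤ v) (hv : v ≤ xc) (hxc : 0 < xc) :
    Real.log u - u / xc ≤ Real.log v - v / xc := by
  have hv0 : 0 < v := hu.trans_le huv
  have h1 : Real.log (u / v) ≤ u / v - 1 := Real.log_le_sub_one_of_pos (div_pos hu hv0)
  rw [Real.log_div hu.ne' hv0.ne'] at h1
  have h2 : u / v - 1 ≤ (u - v) / xc := by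
    rw [div_sub_one hv0.ne', div_le_div_iff₀ hv0 hxc]
    nlinarith [mul_le_mul_of_nonneg_left hv (sub_nonneg.2 huv)]
  have h3 : (u - v) / xc = u / xc - v / xc := sub_div _ _ _
  linarith

/-- `log u - u/xc` is antitone on `[xc, ∞)`. -/
lemma phiB {xc u v : ℝ} (hxc : 0 < xc) (hu : xc ≤ u) (huv : u ≤ v) :
    Real.log v - v / xc ≤ Real.log u - u / xc := by
  have hu0 : 0 < u := hxc.trans_le hu
  have hv0 : 0 < v := hu0.trans_le huv
  have h1 : Real.log (v / u) ≤ v / u - 1 := Real.log_le_sub_one_of_pos (div_pos hv0 hu0)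
  rw [Real.log_div hv0.ne' hu0.ne'] at h1
  have h2 : v / u - 1 ≤ (v - u) / xc := by
    rw [div_sub_one hu0.ne', div_le_div_iff₀ hu0 hxc]
    nlinarith [mul_le_mul_of_nonneg_left hu (sub_nonneg.2 huv)]
  have h3 : (v - u) / xc = v / xc - u / xc := sub_div _ _ _
  linarith

/-- Ratio identity: the α₁-density equals the α₂-"kernel" times `c₁ · exp(Δ·φ(u))`. -/
lemma gd_eq (α1 α2 xc u : ℝ) (hxc : 0 < xc) (hu : 0 < u) :
    gammaDens α1 ((α1 + 1 / 2) / xc) u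
      = ((((α1 + 1 / 2) / xc) ^ α1 / Real.Gamma α1)
          * Real.exp ((α1 - α2) * (Real.log u - u / xc)))
        * (u ^ (α2 - 1) * Real.exp (-((α2 + 1 / 2) / xc) * u)) := by
  unfold gammaDens
  rw [Real.rpow_def_of_pos hu (α1 - 1), Real.rpow_def_of_pos hu (α2 - 1),
    mul_assoc, mul_assoc]
  simp only [← Real.exp_add]
  congr 1
  field_simp
  ring

lemma gd2_eq (a b u : ℝ) :
    gammaDens a b u = (b ^ a / Real.Gamma a) * (u ^ (a - 1) * Real.exp (-b * u)) := by
  unfold gammaDens; ring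

/-- Pointwise comparison, inside direction. -/
lemma gd_compare_in {α1 α2 xc u t : ℝ} (hα1 : 0 < α1) (hxc : 0 < xc) (hu : 0 < u)
    (hΔ : 0 ≤ α1 - α2) (ht : t ≤ Real.log u - u / xc)
    (hK : ((α2 + 1 / 2) / xc) ^ α2 / Real.Gamma α2
        ≤ ((α1 + 1 / 2) / xc) ^ α1 / Real.Gamma α1 * Real.exp ((α1 - α2) * t)) :
    gammaDens α2 ((α2 + 1 / 2) / xc) u ≤ gammaDens α1 ((α1 + 1 / 2) / xc) u := by
  have hβ1 : 0 < (α1 + 1 / 2) / xc := by positivity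
  have hc1 : 0 ≤ ((α1 + 1 / 2) / xc) ^ α1 / Real.Gamma α1 :=
    (div_pos (Real.rpow_pos_of_pos hβ1 _) (Real.Gamma_pos_of_pos hα1)).le
  rw [gd_eq α1 α2 xc u hxc hu, gd2_eq]
  refine mul_le_mul_of_nonneg_right ?_
    (mul_nonneg (Real.rpow_nonneg hu.le _) (Real.exp_nonneg _))
  refine hK.trans (mul_le_mul_of_nonneg_left ?_ hc1)
  exact Real.exp_le_exp.2 (mul_le_mul_of_nonneg_left ht hΔ)

/-- Pointwise comparison, outside direction. -/
lemma gd_compare_out {α1 α2 xc u t : ℝ} (hα1 : 0 < α1) (hxc : 0 < xc) (hu : 0 < u)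
    (hΔ : 0 ≤ α1 - α2) (ht : Real.log u - u / xc ≤ t)
    (hK : ((α1 + 1 / 2) / xc) ^ α1 / Real.Gamma α1 * Real.exp ((α1 - α2) * t)
        ≤ ((α2 + 1 / 2) / xc) ^ α2 / Real.Gamma α2) :
    gammaDens α1 ((α1 + 1 / 2) / xc) u ≤ gammaDens α2 ((α2 + 1 / 2) / xc) u := by
  have hβ1 : 0 < (α1 + 1 / 2) / xc := by positivity
  have hc1 : 0 ≤ ((α1 + 1 / 2) / xc) ^ α1 / Real.Gamma α1 :=
    (div_pos (Real.rpow_pos_of_pos hβ1 _) (Real.Gamma_pos_of_pos hα1)).le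
  rw [gd_eq α1 α2 xc u hxc hu, gd2_eq]
  refine mul_le_mul_of_nonneg_right ?_
    (mul_nonneg (Real.rpow_nonneg hu.le _) (Real.exp_nonneg _))
  refine le_trans (mul_le_mul_of_nonneg_left ?_ hc1) hK
  exact Real.exp_le_exp.2 (mul_le_mul_of_nonneg_left ht hΔ)

lemma gd_integrable (a b : ℝ) (ha : 0 < a) (hb : 0 < b) :
    MeasureTheory.IntegrableOn (gammaDens a b) (Set.Ioi 0) := by
  have h := integrableOn_rpow_mul_exp_neg_mul_rpow (s := a - 1) (p := 1)
    (by linarith) one_pos hb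
  simp_rw [Real.rpow_one] at h
  have h2 : MeasureTheory.IntegrableOn
      (fun u : ℝ => (b ^ a / Real.Gamma a) * (u ^ (a - 1) * Real.exp (-b * u)))
      (Set.Ioi 0) := h.const_mul _
  refine h2.congr_fun (fun u _ => ?_) measurableSet_Ioi
  unfold gammaDens; ring

lemma gd_int (a b : ℝ) (ha : 0 < a) (hb : 0 < b) :
    ∫ u in Set.Ioi (0 : ℝ), gammaDens a b u = 1 := by
  have h : ∀ u : ℝ, gammaDens a b u
      = (b ^ a / Real.Gamma a) * (u ^ (a - 1) * Real.exp (-(b * u))) := by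
    intro u; unfold gammaDens; rw [neg_mul]; ring
  simp_rw [h]
  rw [MeasureTheory.integral_const_mul, Real.integral_rpow_mul_exp_neg_mul_Ioi ha hb,
    one_div, Real.inv_rpow hb.le]
  have hba : (b : ℝ) ^ a ≠ 0 := (Real.rpow_pos_of_pos hb a).ne'
  have hga : Real.Gamma a ≠ 0 := (Real.Gamma_pos_of_pos ha).ne'
  field_simp

/-- Let `α₁ ≥ α₂ > 0`, `β_i = (α_i + 1/2)/x_c` with `x_c > 0`, and let `M_i`
be the Gamma(α_i, rate β_i) distribution.  For `0 < r₁ ≤ 1 ≤ r₂` linked by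
`r₁ e^{−r₁} = r₂ e^{−r₂}` (equivalently `log(r₁/r₂) = r₁ − r₂`), one has
`M₁(x_c r₁ ≤ u ≤ x_c r₂) ≥ M₂(x_c r₁ ≤ u ≤ x_c r₂)`. -/
theorem stmt19 (α1 α2 xc r1 r2 : ℝ)
    (hα2 : 0 < α2) (hα : α2 ≤ α1) (hxc : 0 < xc)
    (hr1 : 0 < r1) (hr1le : r1 ≤ 1) (hr2 : 1 ≤ r2)
    (hlink : r1 * Real.exp (-r1) = r2 * Real.exp (-r2)) :
    (∫ u in Set.Icc (xc * r1) (xc * r2), gammaDens α2 ((α2 + 1 / 2) / xc) u)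
      ≤ ∫ u in Set.Icc (xc * r1) (xc * r2), gammaDens α1 ((α1 + 1 / 2) / xc) u := by
  have hα1 : 0 < α1 := lt_of_lt_of_le hα2 hα
  have hr2p : 0 < r2 := lt_of_lt_of_le one_pos hr2
  have hβ1 : 0 < (α1 + 1 / 2) / xc := by positivity
  have hβ2 : 0 < (α2 + 1 / 2) / xc := by positivity
  have hΔ : 0 ≤ α1 - α2 := sub_nonneg.2 hα
  have ha0 : 0 < xc * r1 := mul_pos hxc hr1
  have haxc : xc * r1 ≤ xc := by nlinarith
  have hxcb : xc ≤ xc * r2 := by nlinarith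
  have hab : xc * r1 ≤ xc * r2 := haxc.trans hxcb
  -- link in log form
  have hloglink : Real.log r1 - r1 = Real.log r2 - r2 := by
    have h := congrArg Real.log hlink
    rw [Real.log_mul hr1.ne' (Real.exp_ne_zero _),
      Real.log_mul hr2p.ne' (Real.exp_ne_zero _), Real.log_exp, Real.log_exp] at h
    linarith
  have hda : (xc * r1) / xc = r1 := by field_simp
  have hdb : (xc * r2) / xc = r2 := by field_simp
  have hφlink : Real.log (xc * r1) - (xc * r1) / xc
      = Real.log (xc * r2) - (xc * r2) / xc := by
    rw [Real.log_mul hxc.ne' hr1.ne', Real.log_mul hxc.ne' hr2p.ne', hda, hdb]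
    linarith
  -- φ comparisons
  have hin : ∀ u ∈ Set.Icc (xc * r1) (xc * r2),
      Real.log (xc * r1) - (xc * r1) / xc ≤ Real.log u - u / xc := by
    intro u hu
    rcases le_total u xc with h | h
    · exact phiA ha0 hu.1 h hxc
    · rw [hφlink]; exact phiB hxc h hu.2
  have hout1 : ∀ u ∈ Set.Ioo (0 : ℝ) (xc * r1),
      Real.log u - u / xc ≤ Real.log (xc * r1) - (xc * r1) / xc :=
    fun u hu => phiA hu.1 hu.2.le haxc hxc
  have hout2 : ∀ u ∈ Set.Ioi (xc * r2),
      Real.log u - u / xc ≤ Real.log (xc * r1) - (xc * r1) / xc := by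
    intro u hu
    rw [hφlink]
    exact phiB hxc hxcb (le_of_lt hu)
  -- integrability
  have hint1 := gd_integrable α1 ((α1 + 1 / 2) / xc) hα1 hβ1
  have hint2 := gd_integrable α2 ((α2 + 1 / 2) / xc) hα2 hβ2
  have hsubIcc : Set.Icc (xc * r1) (xc * r2) ⊆ Set.Ioi (0 : ℝ) :=
    fun u hu => lt_of_lt_of_le ha0 hu.1
  by_cases hK : ((α2 + 1 / 2) / xc) ^ α2 / Real.Gamma α2
      ≤ ((α1 + 1 / 2) / xc) ^ α1 / Real.Gamma α1
        * Real.exp ((α1 - α2) * (Real.log (xc * r1) - (xc * r1) / xc))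
  · refine setIntegral_mono_on (hint2.mono_set hsubIcc) (hint1.mono_set hsubIcc)
      measurableSet_Icc ?_
    intro u hu
    exact gd_compare_in hα1 hxc (hsubIcc hu) hΔ (hin u hu) hK
  · push_neg at hK
    have hK' := hK.le
    -- decompose (0,∞)
    have hd1 : Disjoint (Set.Ioo (0 : ℝ) (xc * r1)) (Set.Ici (xc * r1)) :=
      (Set.Iio_disjoint_Ici le_rfl).mono_left Set.Ioo_subset_Iio_self
    have hd2 : Disjoint (Set.Icc (xc * r1) (xc * r2)) (Set.Ioi (xc * r2)) :=
      (Set.Iic_disjoint_Ioi le_rfl).mono_left Set.Icc_subset_Iic_self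
    have hsubOoo : Set.Ioo (0 : ℝ) (xc * r1) ⊆ Set.Ioi 0 := Set.Ioo_subset_Ioi_self
    have hsubIoi : Set.Ioi (xc * r2) ⊆ Set.Ioi (0 : ℝ) :=
      Set.Ioi_subset_Ioi (le_of_lt (lt_of_lt_of_le ha0 hab))
    have hsubIci : Set.Ici (xc * r1) ⊆ Set.Ioi (0 : ℝ) := fun u hu => lt_of_lt_of_le ha0 hu
    have hsplit : ∀ f : ℝ → ℝ, MeasureTheory.IntegrableOn f (Set.Ioi 0) →
        ∫ u in Set.Ioi (0 : ℝ), f u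
          = (∫ u in Set.Ioo (0 : ℝ) (xc * r1), f u)
            + ((∫ u in Set.Icc (xc * r1) (xc * r2), f u)
                + ∫ u in Set.Ioi (xc * r2), f u) := by
      intro f hf
      rw [← setIntegral_union hd2 measurableSet_Ioi (hf.mono_set hsubIcc)
          (hf.mono_set hsubIoi), Set.Icc_union_Ioi_eq_Ici hab,
        ← setIntegral_union hd1 measurableSet_Ici (hf.mono_set hsubOoo)
          (hf.mono_set hsubIci), Set.Ioo_union_Ici_eq_Ioi ha0]
    have e1 := hsplit _ hint1
    have e2 := hsplit _ hint2
    rw [gd_int α1 ((α1 + 1 / 2) / xc) hα1 hβ1] at e1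
    rw [gd_int α2 ((α2 + 1 / 2) / xc) hα2 hβ2] at e2
    have m1 : (∫ u in Set.Ioo (0 : ℝ) (xc * r1), gammaDens α1 ((α1 + 1 / 2) / xc) u)
        ≤ ∫ u in Set.Ioo (0 : ℝ) (xc * r1), gammaDens α2 ((α2 + 1 / 2) / xc) u := by
      refine setIntegral_mono_on (hint1.mono_set hsubOoo) (hint2.mono_set hsubOoo)
        measurableSet_Ioo ?_
      exact fun u hu => gd_compare_out hα1 hxc hu.1 hΔ (hout1 u hu) hK'
    have m2 : (∫ u in Set.Ioi (xc * r2), gammaDens α1 ((α1 + 1 / 2) / xc) u)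
        ≤ ∫ u in Set.Ioi (xc * r2), gammaDens α2 ((α2 + 1 / 2) / xc) u := by
      refine setIntegral_mono_on (hint1.mono_set hsubIoi) (hint2.mono_set hsubIoi)
        measurableSet_Ioi ?_
      exact fun u hu => gd_compare_out hα1 hxc (hsubIoi hu) hΔ (hout2 u hu) hK'
    linarith
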